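/- Let (X, μ) be a measure space and M ⊆ X a measurable set with 0 < μ(M) < ∞. Let (f_n)_{n∈ℕ} be a sequence in L²(μ) converging in the L²(μ)-norm to the function μ(M)^{-1}·χ_M (the normalized indicator of M), and assume ∫_{X∖M}ف_n² dμ > 0 for every n. Define g_n := f_n / (∫_{X∖M} f_n² dμ)^{1/4}. Then ∫_M g_n² dμ → ∞ and ∫_{X∖M} g_n² dμ → 0 as n → ∞. (This is the rescaling construction proving the localized potentials result, Lemma 4.3, from the Runge approximation property, Theorem 3.1.) -/

import Mathlib

open MeasureTheory Filter

private lemma tendsto_setIntegral_sq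
    {X : Type*} [MeasurableSpace X] {μ : Measure X} (S : Set X)
    (f : ℕ → X → ℝ) (h : X → ℝ) (hf : ∀ n, MemLp (f n) 2 μ) (hh : MemLp h 2 μ)
    (hconv : Tendsto (fun n => eLpNorm (fun x => f n x - h x) 2 μ) atTop (nhds 0)) :
    Tendsto (fun n => ∫ x in S, (f n x) ^ 2 ∂μ) atTop (nhds (∫ x in S, (h x) ^ 2 ∂μ)) := by
  set ν := μ.restrict S
  have hfS : ∀ n, MemLp (f n) 2 ν := fun n => (hf n).restrict S
  have hhS : MemLp h 2 ν := hh.restrict S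
  have hdS : ∀ n, MemLp (fun x => f n x - h x) 2 ν := fun n => (hfS n).sub hhS
  -- the restricted difference norm tends to 0
  have hconvS : Tendsto (fun n => ((eLpNorm (fun x => f n x - h x) 2 ν)).toReal)
      atTop (nhds 0) := by
    have h0 : Tendsto (fun n => eLpNorm (fun x => f n x - h x) 2 ν) atTop (nhds 0) := by
      refine tendsto_of_tendsto_of_tendsto_of_le_of_le tendsto_const_nhds hconv
        (fun n => zero_le) (fun n => eLpNorm_restrict_le _ _ _ _)
    have hfin : ∀ n, eLpNorm (fun x => f n x - h x) 2 ν ≠ ⊤ := fun n => (hdS n).2.ne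
    rw [← ENNReal.tendsto_toReal_iff hfin (by simp)] at h0
    simpa using h0
  set a : ℕ → ℝ := fun n => (eLpNorm (f n) 2 ν).toReal with ha
  set b : ℝ := (eLpNorm h 2 ν).toReal with hb
  have key : ∀ n, |a n - b| ≤ (eLpNorm (fun x => f n x - h x) 2 ν).toReal := by
    intro n
    have hfin1 : eLpNorm (f n) 2 ν ≠ ⊤ := (hfS n).2.ne
    have hfin2 : eLpNorm h 2 ν ≠ ⊤ := hhS.2.ne
    have hfin3 : eLpNorm (fun x => f n x - h x) 2 ν ≠ ⊤ := (hdS n).2.ne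
    rw [abs_sub_le_iff]
    have han : a n = (eLpNorm (f n) 2 ν).toReal := rfl
    have hbn : b = (eLpNorm h 2 ν).toReal := rfl
    constructor
    · have h1 : eLpNorm (f n) 2 ν ≤ eLpNorm (fun x => f n x - h x) 2 ν + eLpNorm h 2 ν := by
        have h2 := eLpNorm_add_le (ε := ℝ) (p := 2) (μ := ν)
          (f := fun x => f n x - h x) (g := h) (hdS n).1 hhS.1 (by norm_num)
        have he : ((fun x => f n x - h x) + h) = f n := by funext x; simp
        rwa [he] at h2
      have h3 := ENNReal.toReal_mono (ENNReal.add_ne_top.2 ⟨hfin3, hfin2⟩) h1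
      rw [ENNReal.toReal_add hfin3 hfin2] at h3
      rw [han, hbn]; linarith
    · have h1 : eLpNorm h 2 ν ≤ eLpNorm (fun x => f n x - h x) 2 ν + eLpNorm (f n) 2 ν := by
        have h2 := eLpNorm_add_le (ε := ℝ) (p := 2) (μ := ν)
          (f := -(fun x => f n x - h x)) (g := f n) ((hdS n).neg).1 (hfS n).1 (by norm_num)
        have he : ((-(fun x => f n x - h x)) + f n) = h := by
          funext x; simp [Pi.add_apply, Pi.neg_apply]
        rwa [he, eLpNorm_neg] at h2
      have h3 := ENNReal.toReal_mono (ENNReal.add_ne_top.2 ⟨hfin3, hfin1⟩) h1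
      rw [ENNReal.toReal_add hfin3 hfin1] at h3
      rw [han, hbn]; linarith
  have hab : Tendsto a atTop (nhds b) := by
    rw [tendsto_iff_dist_tendsto_zero]
    refine squeeze_zero (fun n => dist_nonneg) (fun n => ?_) hconvS
    simpa [Real.dist_eq] using key n
  -- identify integrals with squared norms
  have hid : ∀ (F : X → ℝ), MemLp F 2 ν → ∫ x in S, (F x) ^ 2 ∂μ
      = ((eLpNorm F 2 ν).toReal) ^ 2 := by
    intro F hF
    rw [hF.eLpNorm_eq_integral_rpow_norm (by norm_num) (by norm_num)]
    simp only [ENNReal.toReal_ofNat]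
    have heq : ∀ x, ‖F x‖ ^ (2:ℝ) = F x ^ 2 := fun x => by
      rw [show ((2:ℝ)) = ((2:ℕ):ℝ) by norm_num, Real.rpow_natCast, Real.norm_eq_abs, sq_abs]
    simp only [heq]
    have hint : 0 ≤ ∫ x, F x ^ 2 ∂ν := integral_nonneg fun x => by positivity
    rw [ENNReal.toReal_ofReal (Real.rpow_nonneg hint _)]
    rw [← Real.rpow_natCast (_ ^ _) 2, ← Real.rpow_mul hint]
    norm_num
    rfl
  have := (hab.pow 2)
  simp only [hb, ← hid _ hhS] at this
  refine this.congr fun n => ?_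
  rw [hid _ (hfS n)]

/-- Rescaling construction proving the localized potentials result (Lemma 4.3)
from the Runge approximation property (Theorem 3.1): if `f_n → μ(M)⁻¹·χ_M` in
`L²(μ)` and `g_n := f_n / (∫_{X∖M} f_n² dμ)^{1/4}`, then `∫_M g_n² dμ → ∞` and
`∫_{X∖M} g_n² dμ → 0`. -/
theorem localized_potentials_rescaling
    {X : Type*} [MeasurableSpace X] {μ : Measure X}
    (M : Set X) (hM : MeasurableSet M) (hM0 : 0 < μ M) (hMfin : μ M < ⊤)
    (f : ℕ → X → ℝ) (hf : ∀ n, MemLp (f n) 2 μ)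
    (hconv : Tendsto
      (fun n => eLpNorm (fun x => f n x - M.indicator (fun _ => (μ M).toReal⁻¹) x) 2 μ)
      atTop (nhds 0))
    (hpos : ∀ n, 0 < ∫ x in Mᶜ, (f n x) ^ 2 ∂μ)
    (g : ℕ → X → ℝ)
    (hg : ∀ n x, g n x = f n x / (∫ x in Mᶜ, (f n x) ^ 2 ∂μ) ^ ((1 : ℝ) / 4)) :
    Tendsto (fun n => ∫ x in M, (g n x) ^ 2 ∂μ) atTop atTop ∧
      Tendsto (fun n => ∫ x in Mᶜ, (g n x) ^ 2 ∂μ) atTop (nhds 0) := by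
  set h : X → ℝ := M.indicator (fun _ => (μ M).toReal⁻¹) with hh_def
  have hMt : 0 < (μ M).toReal := ENNReal.toReal_pos hM0.ne' hMfin.ne
  have hh : MemLp h 2 μ := memLp_indicator_const 2 hM _ (Or.inr hMfin.ne)
  set c : ℕ → ℝ := fun n => ∫ x in Mᶜ, (f n x) ^ 2 ∂μ with hc_def
  set d : ℕ → ℝ := fun n => ∫ x in M, (f n x) ^ 2 ∂μ with hd_def
  -- limits of c and d
  have hc0 : Tendsto c atTop (nhds 0) := by
    have := tendsto_setIntegral_sq Mᶜ f h hf hh hconv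
    have hz : ∫ x in Mᶜ, (h x) ^ 2 ∂μ = 0 := by
      refine setIntegral_eq_zero_of_forall_eq_zero fun x hx => ?_
      simp [hh_def, Set.indicator_of_notMem (Set.notMem_compl_iff.mp (not_not_intro hx))]
    rwa [hz] at this
  have hdL : Tendsto d atTop (nhds ((μ M).toReal⁻¹)) := by
    have := tendsto_setIntegral_sq M f h hf hh hconv
    have hz : ∫ x in M, (h x) ^ 2 ∂μ = (μ M).toReal⁻¹ := by
      rw [setIntegral_congr_fun hM (g := fun _ => ((μ M).toReal⁻¹) ^ 2)
        (fun x hx => by simp [hh_def, Set.indicator_of_mem hx])]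
      rw [setIntegral_const]
      rw [smul_eq_mul, sq]
      field_simp
      rfl
    rwa [hz] at this
  -- square root of c
  set e : ℕ → ℝ := fun n => (c n) ^ ((1:ℝ)/2) with he_def
  have hepos : ∀ n, 0 < e n := fun n => Real.rpow_pos_of_pos (hpos n) _
  have he0 : Tendsto e atTop (nhds 0) := by
    have h2 := hc0.rpow_const (p := (1:ℝ)/2) (Or.inr (by norm_num))
    rw [Real.zero_rpow (by norm_num : (1:ℝ)/2 ≠ 0)] at h2
    exact h2
  -- rewrite the integrals of g
  have hgM : ∀ n, ∫ x in M, (g n x) ^ 2 ∂μ = d n / e n := by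
    intro n
    rw [← integral_div]
    refine setIntegral_congr_fun hM fun x _ => ?_
    rw [hg n x, div_pow, he_def]
    congr 1
    rw [← Real.rpow_natCast (_ ^ _) 2, ← Real.rpow_mul (hpos n).le]
    norm_num
    rfl
  have hgMc : ∀ n, ∫ x in Mᶜ, (g n x) ^ 2 ∂μ = e n := by
    intro n
    have : ∫ x in Mᶜ, (g n x) ^ 2 ∂μ = c n / e n := by
      rw [← integral_div]
      refine setIntegral_congr_fun hM.compl fun x _ => ?_
      rw [hg n x, div_pow, he_def]
      congr 1
      rw [← Real.rpow_natCast (_ ^ _) 2, ← Real.rpow_mul (hpos n).le]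
      norm_num
      rfl
    rw [this, he_def]
    rw [eq_comm, eq_div_iff (hepos n).ne', ← Real.rpow_add (hpos n)]
    norm_num
    rfl
  constructor
  · have he0' : Tendsto e atTop (nhdsWithin 0 (Set.Ioi 0)) :=
      tendsto_nhdsWithin_of_tendsto_nhds_of_eventually_within _ he0
        (Eventually.of_forall fun n => hepos n)
    have hinv : Tendsto (fun n => (e n)⁻¹) atTop atTop := he0'.inv_tendsto_nhdsGT_zero
    have hmul := Filter.Tendsto.pos_mul_atTop (by positivity : (0:ℝ) < (μ M).toReal⁻¹) hdL hinv
    refine hmul.congr fun n => ?_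
    rw [hgM n, div_eq_mul_inv]
  · exact (he0.congr fun n => (hgMc n).symm)
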